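/- arXiv:1708.06883 — 10 statements merged into one kernel-verified Lean document; each statement's English description precedes it below -/
import Mathlib

section
/- Let G be a finite simple graph on vertex set {x_1,...,x_h, y_1,...,y_h} such that X = {x_1,...,x_h} is a minimal vertex cover of G, Y = {y_1,...,y_h} is a maximal independent set of G, {x_i,y_i} ∈ E(G) for all i, and G satisfies: (1) for distinct i,j,k and z_i ∈ {x_i,y_i}, if {z_i,x_j} ∈ E(G) and {y_j,x_k} ∈ E(G) then {z_i,x_k} ∈ E(G); (2) if {x_i,y_j} ∈ E(G) then {x_i,x_j} ∉ E(G). Fix i and let N_G(x_i) \ X = {y_{i_1},...,y_{i_t}}. Define X' by replacing, for each j ∈ {i_1,...,i_t}, the vertex x_j by y_j (leaving the other x_j's unchanged), and let Y' = V(G) \ X'. Then Y' is a maximal independent set of G (and hence X' is a minimal vertex cover of G). -/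
open SimpleGraph

/-- Vertex type for a labeled very well-covered graph on 2h vertices:
`Sum.inl i` is xᵢ and `Sum.inr i` is yᵢ. -/
abbrev Vtx (h : ℕ) := Fin h ⊕ Fin h

variable {h : ℕ}

def xv (i : Fin h) : Vtx h := Sum.inl i
def yv (i : Fin h) : Vtx h := Sum.inr i

def IndepSet {W : Type*} (G : SimpleGraph W) (S : Set W) : Prop :=
  ∀ u ∈ S, ∀ v ∈ S, ¬ G.Adj u v

def MaxIndepSet {W : Type*} (G : SimpleGraph W) (S : Set W) : Prop :=
  IndepSet G S ∧ ∀ T : Set W, IndepSet G T → S ⊆ T → S = T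

def VertexCover {W : Type*} (G : SimpleGraph W) (C : Set W) : Prop :=
  ∀ u v : W, G.Adj u v → u ∈ C ∨ v ∈ C

def MinVertexCover {W : Type*} (G : SimpleGraph W) (C : Set W) : Prop :=
  VertexCover G C ∧ ∀ D : Set W, VertexCover G D → D ⊆ C → D = C

/-- Condition (1) of the Crupi–Rinaldo–Terai characterization. -/
def Cond1 (G : SimpleGraph (Vtx h)) : Prop :=
  ∀ i j k : Fin h, i ≠ j → j ≠ k → i ≠ k →
    ∀ z ∈ ({xv i, yv i} : Set (Vtx h)),
      G.Adj z (xv j) → G.Adj (yv j) (xv k) → G.Adj z (xv k)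

/-- Condition (2) of the Crupi–Rinaldo–Terai characterization. -/
def Cond2 (G : SimpleGraph (Vtx h)) : Prop :=
  ∀ i j : Fin h, G.Adj (xv i) (yv j) → ¬ G.Adj (xv i) (xv j)

def Xset (h : ℕ) : Set (Vtx h) := Set.range (xv (h := h))
def Yset (h : ℕ) : Set (Vtx h) := Set.range (yv (h := h))

/-- relabeling certain xⱼ/yⱼ pairs along the neighborhood of xᵢ₀
again yields a maximal independent set / minimal vertex cover. -/
theorem stmt0 (h : ℕ) (G : SimpleGraph (Vtx h))
    (hX : MinVertexCover G (Xset h)) (hY : MaxIndepSet G (Yset h))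
    (hpair : ∀ i : Fin h, G.Adj (xv i) (yv i))
    (h1 : Cond1 G) (h2 : Cond2 G) (i₀ : Fin h)
    (X' Y' : Set (Vtx h))
    (hX' : X' = {v | ∃ j : Fin h,
      (G.Adj (xv i₀) (yv j) ∧ v = yv j) ∨ (¬ G.Adj (xv i₀) (yv j) ∧ v = xv j)})
    (hY' : Y' = X'ᶜ) :
    MaxIndepSet G Y' ∧ MinVertexCover G X' := by
  subst hX' hY'
  set S : Set (Vtx h) := {v | ∃ j : Fin h,
      (G.Adj (xv i₀) (yv j) ∧ v = yv j) ∨ (¬ G.Adj (xv i₀) (yv j) ∧ v = xv j)} with hS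
  -- membership characterizations
  have memx : ∀ j : Fin h, xv j ∈ S ↔ ¬ G.Adj (xv i₀) (yv j) := by
    intro j
    constructor
    · rintro ⟨k, ⟨_, hk⟩ | ⟨hk, hk'⟩⟩
      · exact absurd hk (by simp [xv, yv])
      · rw [show j = k by simpa [xv] using hk']; exact hk
    · intro hj; exact ⟨j, Or.inr ⟨hj, rfl⟩⟩
  have memy : ∀ j : Fin h, yv j ∈ S ↔ G.Adj (xv i₀) (yv j) := by
    intro j
    constructor
    · rintro ⟨k, ⟨hk, hk'⟩ | ⟨_, hk'⟩⟩
      · rw [show j = k by simpa [yv] using hk']; exact hk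
      · exact absurd hk' (by simp [xv, yv])
    · intro hj; exact ⟨j, Or.inl ⟨hj, rfl⟩⟩
  have memxc : ∀ j : Fin h, xv j ∈ Sᶜ ↔ G.Adj (xv i₀) (yv j) := by
    intro j; simp [memx j]
  have memyc : ∀ j : Fin h, yv j ∈ Sᶜ ↔ ¬ G.Adj (xv i₀) (yv j) := by
    intro j; simp [memy j]
  -- no y-y edges
  have noyy : ∀ j k : Fin h, ¬ G.Adj (yv j) (yv k) := by
    intro j k hadj
    rcases hX.1 _ _ hadj with hc | hc <;>
      · obtain ⟨m, hm⟩ := hc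
        exact absurd hm (by simp [xv, yv])
  -- key mixed lemma: if x_{i₀}~y_j and x_j~y_k, then x_{i₀}~y_k
  have mixed : ∀ j k : Fin h, G.Adj (xv i₀) (yv j) → G.Adj (xv j) (yv k) →
      G.Adj (xv i₀) (yv k) := by
    intro j k haj hjk
    by_contra hnk
    have hjk' : j ≠ k := fun e => hnk (e ▸ haj)
    have hji : j ≠ i₀ := by
      rintro rfl; exact hnk hjk
    have hki : k ≠ i₀ := by
      intro e; rw [e] at hnk; exact hnk (hpair i₀)
    have := h1 k j i₀ (Ne.symm hjk') hji hki (yv k) (by simp) hjk.symm haj.symm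
    exact hnk this.symm
  -- Y' = Sᶜ is independent
  have hindep : IndepSet G Sᶜ := by
    intro u hu v hv hadj
    cases u with
    | inl j =>
      have haj : G.Adj (xv i₀) (yv j) := (memxc j).1 hu
      cases v with
      | inl k =>
        -- x_j ~ x_k with x_{i₀}~y_j, x_{i₀}~y_k
        have hak : G.Adj (xv i₀) (yv k) := (memxc k).1 hv
        have hjk : j ≠ k := by rintro rfl; exact G.irrefl hadj
        by_cases hji : j = i₀
        · rw [hji] at hadj; exact h2 i₀ k hak hadj
        · by_cases hki : k = i₀
          · rw [hki] at hadj; exact h2 i₀ j haj hadj.symm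
          · have := h1 j k i₀ hjk hki hji (xv j) (by simp) hadj hak.symm
            exact h2 i₀ j haj this.symm
      | inr k =>
        have hnk : ¬ G.Adj (xv i₀) (yv k) := (memyc k).1 hv
        exact hnk (mixed j k haj hadj)
    | inr j =>
      have hnj : ¬ G.Adj (xv i₀) (yv j) := (memyc j).1 hu
      cases v with
      | inl k =>
        have hak : G.Adj (xv i₀) (yv k) := (memxc k).1 hv
        exact hnj (mixed k j hak hadj.symm)
      | inr k => exact noyy j k hadj
  -- key: every vertex of S has a neighbor in Sᶜ
  have hnbr : ∀ v ∈ S, ∃ w ∈ Sᶜ, G.Adj v w := by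
    intro v hv
    cases v with
    | inl j =>
      have hnj : ¬ G.Adj (xv i₀) (yv j) := (memx j).1 hv
      exact ⟨yv j, (memyc j).2 hnj, hpair j⟩
    | inr j =>
      have haj : G.Adj (xv i₀) (yv j) := (memy j).1 hv
      exact ⟨xv i₀, (memxc i₀).2 (hpair i₀), haj.symm⟩
  have hmax : MaxIndepSet G Sᶜ := by
    refine ⟨hindep, fun T hT hsub => ?_⟩
    refine Set.Subset.antisymm hsub fun v hvT => ?_
    by_contra hvS
    obtain ⟨w, hw, hvw⟩ := hnbr v (not_not.1 hvS)
    exact hT v hvT w (hsub hw) hvw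
  refine ⟨hmax, ?_, ?_⟩
  · -- S is a vertex cover
    intro u v hadj
    by_contra hc
    push_neg at hc
    exact hindep u hc.1 v hc.2 hadj
  · -- minimality
    intro D hD hDS
    have hDc : IndepSet G Dᶜ := by
      intro u hu v hv hadj
      rcases hD u v hadj with hc | hc
      · exact hu hc
      · exact hv hc
    have : Sᶜ = Dᶜ := hmax.2 Dᶜ hDc (Set.compl_subset_compl.2 hDS)
    have := congrArg compl this
    simpa using this.symm
end

section
/- Let G be a finite simple graph on vertex set {x_1,...,x_h, y_1,...,y_h} with Y = {y_1,...,y_h} a maximal independent set, X = {x_1,...,x_h} a vertex cover, {x_i,y_i} ∈ E(G) for all i, and satisfying: (1) for distinct i,j,k and z_i ∈ {x_i,y_i}, if {z_i,x_j} ∈ E(G) and {y_j,x_k} ∈ E(G) then {z_i,x_k} ∈ E(G); (2) if {x_i,y_j} ∈ E(G) then {x_i,x_j} ∉ E(G). Let e = {x_n, y_m} ∈ E(G) with n ≠ m, and let G' be the graph on V(G) whose edges are E(G) together with all pairs {u,v} of distinct vertices such that {u,x_n}, {y_m,v} ∈ E(G) or {u,y_m}, {x_n,v} ∈ E(G). Then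 Y is still an independent set of G'. -/
open SimpleGraph

variable {h : ℕ}

/-- The graph obtained from `G` by adding all pairs of distinct vertices
even-connected with respect to the single edge `{a, b}`. -/
def ecGraph {W : Type*} (G : SimpleGraph W) (a b : W) : SimpleGraph W where
  Adj u v := u ≠ v ∧ (G.Adj u v ∨ (G.Adj u a ∧ G.Adj b v) ∨ (G.Adj u b ∧ G.Adj a v))
  symm := by
    constructor
    intro u v hv
    obtain ⟨hne, hor⟩ := hv
    refine ⟨hne.symm, ?_⟩
    rcases hor with h' | ⟨h1, h2⟩ | ⟨h1, h2⟩
    · exact Or.inl h'.symm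
    · exact Or.inr (Or.inr ⟨h2.symm, h1.symm⟩)
    · exact Or.inr (Or.inl ⟨h2.symm, h1.symm⟩)
  loopless := by constructor; intro u hu; exact hu.1 rfl

/-- adding the pairs even-connected with respect to an edge
{xₙ, yₘ} keeps Y an independent set. -/
theorem stmt3 (h : ℕ) (G : SimpleGraph (Vtx h))
    (hY : MaxIndepSet G (Yset h)) (hX : VertexCover G (Xset h))
    (hpair : ∀ i : Fin h, G.Adj (xv i) (yv i))
    (h1 : Cond1 G) (h2 : Cond2 G)
    (n m : Fin h) (hnm : n ≠ m) (he : G.Adj (xv n) (yv m))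
    (G' : SimpleGraph (Vtx h)) (hG' : G' = ecGraph G (xv n) (yv m)) :
    IndepSet G' (Yset h) := by
  intro u hu v hv hadj
  obtain ⟨i, rfl⟩ := hu
  obtain ⟨j, rfl⟩ := hv
  subst hG'
  obtain ⟨hne, hor⟩ := hadj
  have hm : yv m ∈ Yset h := ⟨m, rfl⟩
  rcases hor with h' | ⟨ha, hb⟩ | ⟨ha, hb⟩
  · exact hY.1 _ ⟨i, rfl⟩ _ ⟨j, rfl⟩ h'
  · exact hY.1 _ hm _ ⟨j, rfl⟩ hb
  · exact hY.1 _ ⟨i, rfl⟩ _ hm ha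
end

section
/- Let G be a finite simple graph on vertex set {x_1,...,x_h, y_1,...,y_h} with Y = {y_1,...,y_h} a maximal independent set, X = {x_1,...,x_h} a minimal vertex cover, {x_i,y_i} ∈ E(G) for all i, and satisfying: (1) for distinct i,j,k and z_i ∈ {x_i,y_i}, if {z_i,x_j} ∈ E(G) and {y_j,x_k} ∈ E(G) then {z_i,x_k} ∈ E(G); (2) if {x_i,y_j} ∈ E(G) then {x_i,x_j} ∉ E(G). Let e = {x_n, y_m} ∈ E(G) and assume no vertex u of G is adjacent to both x_n and y_m. Let G' be the graph on V(G) whose edges are E(G) together with all pairs {u,v} of distinct vertices with ({u,x_n}, {y_m,v} ∈ E(G)) or ({u,y_m}, {x_n,v} ∈ E(G)). Then G' also satisfies condition (2): if {x_i, y_j} ∈ E(G') then {x_i, x_j} ∉ E(G'). -/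
open SimpleGraph

variable {h : ℕ}

/-- if no vertex is adjacent to both xₙ and yₘ (squarefree case),
the even-connection graph G' of the edge {xₙ, yₘ} again satisfies condition (2). -/
theorem stmt4 (h : ℕ) (G : SimpleGraph (Vtx h))
    (hY : MaxIndepSet G (Yset h)) (hX : MinVertexCover G (Xset h))
    (hpair : ∀ i : Fin h, G.Adj (xv i) (yv i))
    (h1 : Cond1 G) (h2 : Cond2 G)
    (n m : Fin h) (he : G.Adj (xv n) (yv m))
    (hsq : ∀ u : Vtx h, ¬ (G.Adj u (xv n) ∧ G.Adj u (yv m)))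
    (G' : SimpleGraph (Vtx h)) (hG' : G' = ecGraph G (xv n) (yv m)) :
    Cond2 G' := by
  subst hG'
  intro i j hxy hxx
  obtain ⟨hne1, hor1⟩ := hxy
  obtain ⟨hne2, hor2⟩ := hxx
  have hYind : ∀ a b : Fin h, ¬ G.Adj (yv a) (yv b) := fun a b =>
    hY.1 _ ⟨a, rfl⟩ _ ⟨b, rfl⟩
  rcases hor1 with ha | ⟨_, hb2⟩ | ⟨hc1, hc2⟩
  · -- case (a): G.Adj x_i y_j
    rcases hor2 with hA | ⟨hB1, hB2⟩ | ⟨hC1, hC2⟩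
    · exact h2 i j ha hA
    · -- x_i ~ x_n and y_m ~ x_j
      by_cases hij : i = j
      · subst hij; exact hsq (xv i) ⟨hB1, hB2.symm⟩
      by_cases hmi : m = i
      · subst hmi; exact hsq (xv m) ⟨hB1, hpair m⟩
      by_cases hmj : m = j
      · subst hmj; exact hsq (xv i) ⟨hB1, ha⟩
      · have hmy : G.Adj (yv m) (xv i) :=
          h1 m j i hmj (fun e => hij e.symm) hmi (yv m) (Or.inr rfl) hB2 ha.symm
        exact hsq (xv i) ⟨hB1, hmy.symm⟩
    · -- x_i ~ y_m and x_n ~ x_j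
      by_cases hnj : n = j
      · subst hnj; exact G.loopless.irrefl _ hC2
      by_cases hni : n = i
      · subst hni; exact h2 n j ha hC2
      by_cases hji : j = i
      · subst hji; exact hsq (xv j) ⟨hC2.symm, hC1⟩
      · have hni' : G.Adj (xv n) (xv i) :=
          h1 n j i hnj hji hni (xv n) (Or.inl rfl) hC2 ha.symm
        exact hsq (xv i) ⟨hni'.symm, hC1⟩
  · -- case (b): impossible, y_m ~ y_j
    exact hYind m j hb2
  · -- case (c): x_i ~ y_m and x_n ~ y_j
    rcases hor2 with hA | ⟨hB1, _⟩ | ⟨_, hC2⟩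
    · -- x_i ~ x_j
      by_cases hij : i = j
      · subst hij; exact G.loopless.irrefl _ hA
      by_cases hjn : j = n
      · subst hjn; exact hsq (xv i) ⟨hA, hc1⟩
      by_cases hin : i = n
      · subst hin; exact h2 i j hc2 hA
      · have hxin : G.Adj (xv i) (xv n) :=
          h1 i j n hij hjn hin (xv i) (Or.inl rfl) hA hc2.symm
        exact hsq (xv i) ⟨hxin, hc1⟩
    · exact hsq (xv i) ⟨hB1, hc1⟩
    · exact h2 n j hc2 hC2
end

section
/- Let G be a finite simple graph on vertex set {x_1,...,x_h, y_1,...,y_h} with Y = {y_1,...,y_h} a maximal independent set, X = {x_1,...,x_h} a minimal vertex cover, {x_i,y_i} ∈ E(G) for all i, and satisfying conditions: (1) for distinct i,j,k and z_i ∈ {x_i,y_i}, if {z_i,x_j} ∈ E(G) and {y_j,x_k} ∈ E(G) then {z_i,x_k} ∈ E(G); (2) if {x_i,y_j} ∈ E(G) then {x_i,x_j} ∉ E(G). Let e = {x_n, y_m} ∈ E(G) and let G' be the graph on V(G) whose edges are E(G) together with all pairs {u,v} of distinct vertices with ({u,x_n}, {y_m,v} ∈ E(G)) or ({u,y_m},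 {x_n,v} ∈ E(G)). Then G' satisfies condition (1): for distinct i,j,k and z_i ∈ {x_i,y_i}, if {z_i,x_j} ∈ E(G') and {y_j,x_k} ∈ E(G') then {z_i,x_k} ∈ E(G'). -/
open SimpleGraph

variable {h : ℕ}

/-- the even-connection graph G' of an edge {xₙ, yₘ} again
satisfies condition (1). -/
theorem stmt5 (h : ℕ) (G : SimpleGraph (Vtx h))
    (hY : MaxIndepSet G (Yset h)) (hX : MinVertexCover G (Xset h))
    (hpair : ∀ i : Fin h, G.Adj (xv i) (yv i))
    (h1 : Cond1 G) (h2 : Cond2 G)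
    (n m : Fin h) (he : G.Adj (xv n) (yv m))
    (G' : SimpleGraph (Vtx h)) (hG' : G' = ecGraph G (xv n) (yv m)) :
    Cond1 G' := by
  subst hG'
  intro i j k hij hjk hik z hz hA hB
  have noyy : ∀ a b : Fin h, ¬ G.Adj (yv a) (yv b) := fun a b =>
    hY.1 _ ⟨a, rfl⟩ _ ⟨b, rfl⟩
  have hzk : z ≠ xv k := by
    rcases hz with rfl | rfl
    · simpa [xv] using hik
    · simp [xv, yv]
  obtain ⟨-, hA⟩ := hA
  obtain ⟨-, hB⟩ := hB
  refine ⟨hzk, ?_⟩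
  rcases hB with hB | ⟨hB1, hB2⟩ | ⟨hB1, hB2⟩
  · -- B1 : G.Adj (yv j) (xv k)
    rcases hA with hA | ⟨hA1, hA2⟩ | ⟨hA1, hA2⟩
    · exact Or.inl (h1 i j k hij hjk hik z hz hA hB)
    · -- A2: z ~ xn, ym ~ xj ; need ym ~ xk
      have hymk : G.Adj (yv m) (xv k) := by
        by_cases hmj : m = j
        · subst hmj; exact hB
        · by_cases hmk : m = k
          · subst hmk; exact (hpair m).symm
          · exact h1 m j k hmj hjk hmk (yv m) (Set.mem_insert_iff.mpr (Or.inr rfl)) hA2 hB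
      exact Or.inr (Or.inl ⟨hA1, hymk⟩)
    · -- A3: z ~ ym, xn ~ xj ; need xn ~ xk
      have hnj : n ≠ j := by rintro rfl; exact G.irrefl hA2
      by_cases hnk : n = k
      · subst hnk; exact absurd hA2 (h2 n j hB.symm)
      · exact Or.inr (Or.inr ⟨hA1, h1 n j k hnj hjk hnk (xv n)
          (Set.mem_insert_iff.mpr (Or.inl rfl)) hA2 hB⟩)
  · -- B2 : yj ~ xn, ym ~ xk
    rcases hA with hA | ⟨hA1, hA2⟩ | ⟨hA1, hA2⟩
    · by_cases hjn : j = n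
      · subst hjn; exact Or.inr (Or.inl ⟨hA, hB2⟩)
      · by_cases hin : i = n
        · subst hin
          rcases hz with rfl | rfl
          · exact absurd hA (h2 i j hB1.symm)
          · exact Or.inr (Or.inl ⟨(hpair i).symm, hB2⟩)
        · exact Or.inr (Or.inl ⟨h1 i j n hij hjn hin z hz hA hB1, hB2⟩)
    · exact Or.inr (Or.inl ⟨hA1, hB2⟩)
    · exact absurd hA2 (h2 n j hB1.symm)
  · -- B3 : yj ~ ym : impossible
    exact absurd hB1 (noyy j m)
end

section
/- Let G be a finite simple graph on n vertices and let W(G) be the whiskered graph obtained by adding, for each vertex v of G, a new vertex v' and the edge {v,v'}. Then every maximal independent set of W(G) has cardinality exactly n. In particular, W(G) is unmixed (well-covered) and every minimal vertex cover of W(G) has cardinality n = |V(W(G))|/2, so W(G) is a very well-covered graph. -/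
open SimpleGraph

/-- The whiskered graph W(G): to each vertex `v` (in the left copy) attach a
pendant vertex `v'` (in the right copy). -/
def whisker {W : Type*} (G : SimpleGraph W) : SimpleGraph (W ⊕ W) where
  Adj a b := match a, b with
    | .inl u, .inl v => G.Adj u v
    | .inl u, .inr v => u = v
    | .inr u, .inl v => u = v
    | .inr _, .inr _ => False
  symm := ⟨by rintro (u|u) (v|v) hv <;> simp_all <;> exact hv.symm⟩
  loopless := ⟨by rintro (u|u) hu <;> simp_all⟩

lemma maxIndep_card {W : Type*} [Fintype W] (G : SimpleGraph W)
    (S : Set (W ⊕ W)) (hS : MaxIndepSet (whisker G) S) : S.ncard = Fintype.card W := by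
  classical
  obtain ⟨hind, hmax⟩ := hS
  -- for each w, at least one of inl w, inr w ∈ S
  have hone : ∀ w : W, Sum.inl w ∈ S ∨ Sum.inr w ∈ S := by
    intro w
    by_contra h
    push_neg at h
    obtain ⟨h1, h2⟩ := h
    have hT : IndepSet (whisker G) (insert (Sum.inr w) S) := by
      rintro u hu v hv hadj
      rcases hu with rfl | hu <;> rcases hv with rfl | hv
      · exact (whisker G).loopless.irrefl _ hadj
      · cases v with
        | inl v => simp only [whisker] at hadj; subst hadj; exact h1 hv
        | inr v => simp only [whisker] at hadj
      · cases u with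
        | inl u => simp only [whisker] at hadj; subst hadj; exact h1 hu
        | inr u => simp only [whisker] at hadj
      · exact hind u hu v hv hadj
    have := hmax _ hT (Set.subset_insert _ _)
    exact h2 (this ▸ Set.mem_insert _ _)
  have hnot : ∀ w : W, ¬ (Sum.inl w ∈ S ∧ Sum.inr w ∈ S) := by
    rintro w ⟨h1, h2⟩
    exact hind _ h1 _ h2 rfl
  set f : W → W ⊕ W := fun w => if Sum.inl w ∈ S then Sum.inl w else Sum.inr w with hf
  have hinj : Function.Injective f := by
    intro a b hab
    simp only [hf] at hab
    split_ifs at hab <;> simp_all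
  have hrange : S = Set.range f := by
    ext x
    constructor
    · intro hx
      cases x with
      | inl w => exact ⟨w, by simp [hf, hx]⟩
      | inr w =>
        refine ⟨w, ?_⟩
        have : Sum.inl w ∉ S := fun h => hnot w ⟨h, hx⟩
        simp [hf, this]
    · rintro ⟨w, rfl⟩
      simp only [hf]
      split_ifs with h
      · exact h
      · exact (hone w).resolve_left h
  rw [hrange, ← Set.image_univ, Set.ncard_image_of_injective _ hinj, Set.ncard_univ,
    Nat.card_eq_fintype_card]

/-- every maximal independent set of the whiskered graph W(G) has
cardinality n = |V(G)|, and every minimal vertex cover of W(G) has cardinality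
n = |V(W(G))|/2; so W(G) is unmixed and in fact very well-covered. -/
theorem stmt8 {W : Type*} [Fintype W] (G : SimpleGraph W) :
    (∀ S : Set (W ⊕ W), MaxIndepSet (whisker G) S → S.ncard = Fintype.card W) ∧
    (∀ C : Set (W ⊕ W), MinVertexCover (whisker G) C → C.ncard = Fintype.card W) := by
  classical
  refine ⟨fun S hS => maxIndep_card G S hS, fun C hC => ?_⟩
  obtain ⟨hcov, hmin⟩ := hC
  have hcompl : MaxIndepSet (whisker G) Cᶜ := by
    constructor
    · intro u hu v hv hadj
      rcases hcov u v hadj with h | h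
      · exact hu h
      · exact hv h
    · intro T hT hsub
      have hTc : VertexCover (whisker G) Tᶜ := by
        intro u v hadj
        by_contra h
        push_neg at h
        obtain ⟨h1, h2⟩ := h
        simp only [Set.mem_compl_iff, not_not] at h1 h2
        exact hT u h1 v h2 hadj
      have hTcC : Tᶜ ⊆ C := by
        intro x hx
        by_contra hxc
        exact hx (hsub hxc)
      have := hmin _ hTc hTcC
      rw [← compl_compl T, this]
  have hcard := maxIndep_card G Cᶜ hcompl
  have htot : C.ncard + Cᶜ.ncard = Nat.card (W ⊕ W) := Set.ncard_add_ncard_compl C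
  rw [hcard, Nat.card_eq_fintype_card, Fintype.card_sum] at htot
  omega
end

section
/- Let G_1 and G_2 be finite simple graphs on disjoint vertex sets, each containing at least one edge, and let G_1 * G_2 be their join (all edges of G_1, all edges of G_2, and all edges between V(G_1) and V(G_2)). Then the induced matching number satisfies ν(G_1 * G_2) = max{ν(G_1), ν(G_2)}. -/
open SimpleGraph

/-- `M` is an induced matching of `G`: a set of edges of `G`, pairwise disjoint,
such that no edge of `G` joins two distinct edges of `M`. -/
def IsIndMatching {W : Type*} (G : SimpleGraph W) (M : Finset (Sym2 W)) : Prop :=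
  (∀ e ∈ M, e ∈ G.edgeSet) ∧
  ∀ e ∈ M, ∀ f ∈ M, e ≠ f → ∀ a ∈ e, ∀ b ∈ f, a ≠ b ∧ ¬ G.Adj a b

/-- The induced matching number ν(G). -/
noncomputable def indMatchNum {W : Type*} (G : SimpleGraph W) : ℕ :=
  sSup {n | ∃ M : Finset (Sym2 W), IsIndMatching G M ∧ M.card = n}

/-- The join of two graphs on disjoint vertex sets. -/
def joinG {V₁ V₂ : Type*} (G₁ : SimpleGraph V₁) (G₂ : SimpleGraph V₂) :
    SimpleGraph (V₁ ⊕ V₂) where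
  Adj a b := match a, b with
    | .inl u, .inl v => G₁.Adj u v
    | .inr u, .inr v => G₂.Adj u v
    | _, _ => True
  symm := ⟨by rintro (u|u) (v|v) hv <;> simp_all <;> exact hv.symm⟩
  loopless := ⟨by rintro (u|u) hu <;> simp_all⟩

lemma bddIM {W : Type*} [Fintype W] (G : SimpleGraph W) :
    BddAbove {n | ∃ M : Finset (Sym2 W), IsIndMatching G M ∧ M.card = n} := by
  classical
  refine ⟨Fintype.card (Sym2 W), ?_⟩
  rintro n ⟨M, _, rfl⟩
  exact Finset.card_le_univ M

lemma le_nu {W : Type*} [Fintype W] {G : SimpleGraph W} {M : Finset (Sym2 W)}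
    (h : IsIndMatching G M) : M.card ≤ indMatchNum G :=
  le_csSup (bddIM G) ⟨M, h, rfl⟩

lemma nu_spec {W : Type*} [Fintype W] (G : SimpleGraph W) :
    ∃ M : Finset (Sym2 W), IsIndMatching G M ∧ M.card = indMatchNum G := by
  classical
  have hne : ({n | ∃ M : Finset (Sym2 W), IsIndMatching G M ∧ M.card = n} : Set ℕ).Nonempty := by
    refine ⟨0, ∅, ⟨?_, ?_⟩, by simp⟩ <;> intro e he <;> simp at he
  exact Nat.sSup_mem hne (bddIM G)

lemma one_le_nu {W : Type*} [Fintype W] {G : SimpleGraph W} {u v : W}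
    (h : G.Adj u v) : 1 ≤ indMatchNum G := by
  classical
  have : IsIndMatching G {s(u, v)} := by
    constructor
    · intro e he; simp only [Finset.mem_singleton] at he; subst he; exact h
    · intro e he f hf hef
      simp only [Finset.mem_singleton] at he hf
      exact absurd (he.trans hf.symm) hef
  simpa using le_nu this

lemma map_inl_matching {V₁ V₂ : Type*} [DecidableEq (Sym2 (V₁ ⊕ V₂))]
    {G₁ : SimpleGraph V₁} (G₂ : SimpleGraph V₂)
    {M : Finset (Sym2 V₁)} (h : IsIndMatching G₁ M) :
    IsIndMatching (joinG G₁ G₂) (M.image (Sym2.map Sum.inl)) := by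
  classical
  constructor
  · intro e he
    simp only [Finset.mem_image] at he
    obtain ⟨e', he', rfl⟩ := he
    induction e' using Sym2.ind with
    | _ a b =>
      have : G₁.Adj a b := h.1 _ he'
      exact this
  · intro e he f hf hef a ha b hb
    simp only [Finset.mem_image] at he hf
    obtain ⟨e', he', rfl⟩ := he
    obtain ⟨f', hf', rfl⟩ := hf
    have hef' : e' ≠ f' := fun h' => hef (by rw [h'])
    obtain ⟨a', ha', rfl⟩ := Sym2.mem_map.mp ha
    obtain ⟨b', hb', rfl⟩ := Sym2.mem_map.mp hb
    obtain ⟨hne, hadj⟩ := h.2 e' he' f' hf' hef' a' ha' b' hb'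
    exact ⟨fun h' => hne (Sum.inl.inj h'), hadj⟩

lemma map_inr_matching {V₁ V₂ : Type*} [DecidableEq (Sym2 (V₁ ⊕ V₂))]
    (G₁ : SimpleGraph V₁) {G₂ : SimpleGraph V₂}
    {M : Finset (Sym2 V₂)} (h : IsIndMatching G₂ M) :
    IsIndMatching (joinG G₁ G₂) (M.image (Sym2.map Sum.inr)) := by
  classical
  constructor
  · intro e he
    simp only [Finset.mem_image] at he
    obtain ⟨e', he', rfl⟩ := he
    induction e' using Sym2.ind with
    | _ a b =>
      have : G₂.Adj a b := h.1 _ he'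
      exact this
  · intro e he f hf hef a ha b hb
    simp only [Finset.mem_image] at he hf
    obtain ⟨e', he', rfl⟩ := he
    obtain ⟨f', hf', rfl⟩ := hf
    have hef' : e' ≠ f' := fun h' => hef (by rw [h'])
    obtain ⟨a', ha', rfl⟩ := Sym2.mem_map.mp ha
    obtain ⟨b', hb', rfl⟩ := Sym2.mem_map.mp hb
    obtain ⟨hne, hadj⟩ := h.2 e' he' f' hf' hef' a' ha' b' hb'
    exact ⟨fun h' => hne (Sum.inr.inj h'), hadj⟩

lemma pull_left {V₁ V₂ : Type*} {G₁ : SimpleGraph V₁} {G₂ : SimpleGraph V₂}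
    {M : Finset (Sym2 (V₁ ⊕ V₂))} (x₀ : V₁)
    (hM : IsIndMatching (joinG G₁ G₂) M)
    (hall : ∀ e ∈ M, ∀ a ∈ e, ∃ x, a = Sum.inl x) :
    ∃ M₁ : Finset (Sym2 V₁), IsIndMatching G₁ M₁ ∧ M₁.card = M.card := by
  classical
  set f : V₁ ⊕ V₂ → V₁ := Sum.elim id (fun _ => x₀) with hf
  have key : ∀ e ∈ M, Sym2.map Sum.inl (Sym2.map f e) = e := by
    intro e he
    induction e using Sym2.ind with
    | _ a b =>
      obtain ⟨x, hx⟩ := hall _ he a (Sym2.mem_mk_left a b)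
      obtain ⟨y, hy⟩ := hall _ he b (Sym2.mem_mk_right a b)
      subst hx; subst hy
      rfl
  refine ⟨M.image (Sym2.map f), ?_, ?_⟩
  · constructor
    · intro e₁ he₁
      simp only [Finset.mem_image] at he₁
      obtain ⟨e, he, rfl⟩ := he₁
      induction e using Sym2.ind with
      | _ a b =>
        obtain ⟨x, hx⟩ := hall _ he a (Sym2.mem_mk_left a b)
        obtain ⟨y, hy⟩ := hall _ he b (Sym2.mem_mk_right a b)
        subst hx; subst hy
        have : (joinG G₁ G₂).Adj (Sum.inl x) (Sum.inl y) := hM.1 _ he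
        exact this
    · intro e₁ he₁ f₁ hf₁ hne a ha b hb
      simp only [Finset.mem_image] at he₁ hf₁
      obtain ⟨e, he, rfl⟩ := he₁
      obtain ⟨g, hg, rfl⟩ := hf₁
      have heg : e ≠ g := fun h' => hne (by rw [h'])
      obtain ⟨a₀, ha₀, rfl⟩ := Sym2.mem_map.mp ha
      obtain ⟨b₀, hb₀, rfl⟩ := Sym2.mem_map.mp hb
      obtain ⟨x, rfl⟩ := hall _ he a₀ ha₀
      obtain ⟨y, rfl⟩ := hall _ hg b₀ hb₀
      obtain ⟨hne', hadj⟩ := hM.2 e he g hg heg _ ha₀ _ hb₀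
      have hx : f (Sum.inl x) = x := rfl
      have hy : f (Sum.inl y) = y := rfl
      rw [hx, hy]
      refine ⟨fun h' => hne' (by rw [h']), fun h' => hadj h'⟩
  · apply Finset.card_image_of_injOn
    intro e he e' he' hee
    have := key e he
    rw [← this, hee, key e' he']

lemma pull_right {V₁ V₂ : Type*} {G₁ : SimpleGraph V₁} {G₂ : SimpleGraph V₂}
    {M : Finset (Sym2 (V₁ ⊕ V₂))} (x₀ : V₂)
    (hM : IsIndMatching (joinG G₁ G₂) M)
    (hall : ∀ e ∈ M, ∀ a ∈ e, ∃ x, a = Sum.inr x) :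
    ∃ M₂ : Finset (Sym2 V₂), IsIndMatching G₂ M₂ ∧ M₂.card = M.card := by
  classical
  set f : V₁ ⊕ V₂ → V₂ := Sum.elim (fun _ => x₀) id with hf
  have key : ∀ e ∈ M, Sym2.map Sum.inr (Sym2.map f e) = e := by
    intro e he
    induction e using Sym2.ind with
    | _ a b =>
      obtain ⟨x, hx⟩ := hall _ he a (Sym2.mem_mk_left a b)
      obtain ⟨y, hy⟩ := hall _ he b (Sym2.mem_mk_right a b)
      subst hx; subst hy
      rfl
  refine ⟨M.image (Sym2.map f), ?_, ?_⟩
  · constructor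
    · intro e₁ he₁
      simp only [Finset.mem_image] at he₁
      obtain ⟨e, he, rfl⟩ := he₁
      induction e using Sym2.ind with
      | _ a b =>
        obtain ⟨x, hx⟩ := hall _ he a (Sym2.mem_mk_left a b)
        obtain ⟨y, hy⟩ := hall _ he b (Sym2.mem_mk_right a b)
        subst hx; subst hy
        have : (joinG G₁ G₂).Adj (Sum.inr x) (Sum.inr y) := hM.1 _ he
        exact this
    · intro e₁ he₁ f₁ hf₁ hne a ha b hb
      simp only [Finset.mem_image] at he₁ hf₁
      obtain ⟨e, he, rfl⟩ := he₁
      obtain ⟨g, hg, rfl⟩ := hf₁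
      have heg : e ≠ g := fun h' => hne (by rw [h'])
      obtain ⟨a₀, ha₀, rfl⟩ := Sym2.mem_map.mp ha
      obtain ⟨b₀, hb₀, rfl⟩ := Sym2.mem_map.mp hb
      obtain ⟨x, rfl⟩ := hall _ he a₀ ha₀
      obtain ⟨y, rfl⟩ := hall _ hg b₀ hb₀
      obtain ⟨hne', hadj⟩ := hM.2 e he g hg heg _ ha₀ _ hb₀
      have hx : f (Sum.inr x) = x := rfl
      have hy : f (Sum.inr y) = y := rfl
      rw [hx, hy]
      refine ⟨fun h' => hne' (by rw [h']), fun h' => hadj h'⟩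
  · apply Finset.card_image_of_injOn
    intro e he e' he' hee
    have := key e he
    rw [← this, hee, key e' he']

/-- for graphs each containing an edge,
ν(G₁ * G₂) = max{ν(G₁), ν(G₂)}. -/
theorem stmt9 {V₁ V₂ : Type*} [Fintype V₁] [Fintype V₂]
    (G₁ : SimpleGraph V₁) (G₂ : SimpleGraph V₂)
    (h₁ : ∃ u v, G₁.Adj u v) (h₂ : ∃ u v, G₂.Adj u v) :
    indMatchNum (joinG G₁ G₂) = max (indMatchNum G₁) (indMatchNum G₂) := by
  classical
  obtain ⟨u₁, v₁, huv₁⟩ := h₁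
  obtain ⟨u₂, v₂, huv₂⟩ := h₂
  apply le_antisymm
  · obtain ⟨M, hM, hcard⟩ := nu_spec (joinG G₁ G₂)
    rcases le_or_gt M.card 1 with hle | hgt
    · calc indMatchNum (joinG G₁ G₂) = M.card := hcard.symm
        _ ≤ 1 := hle
        _ ≤ indMatchNum G₁ := one_le_nu huv₁
        _ ≤ max (indMatchNum G₁) (indMatchNum G₂) := le_max_left _ _
    · by_cases hleft : ∀ e ∈ M, ∀ a ∈ e, ∃ x, a = Sum.inl x
      · obtain ⟨M₁, hM₁, hc⟩ := pull_left u₁ hM hleft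
        calc indMatchNum (joinG G₁ G₂) = M₁.card := by rw [hc, hcard]
          _ ≤ indMatchNum G₁ := le_nu hM₁
          _ ≤ _ := le_max_left _ _
      · push_neg at hleft
        obtain ⟨e, he, a, ha, hnl⟩ := hleft
        obtain ⟨y, rfl⟩ : ∃ y, a = Sum.inr y := by
          cases a with
          | inl x => exact absurd rfl (hnl x)
          | inr y => exact ⟨y, rfl⟩
        have hall : ∀ g ∈ M, ∀ b ∈ g, ∃ z, b = Sum.inr z := by
          intro g hg b hb
          cases b with
          | inr z => exact ⟨z, rfl⟩
          | inl x =>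
            exfalso
            by_cases hge : g = e
            · subst hge
              obtain ⟨g', hg', hgne⟩ := Finset.exists_mem_ne hgt g
              obtain ⟨c, hc⟩ : ∃ c, c ∈ g' := ⟨g'.out.1, Sym2.out_fst_mem g'⟩
              cases c with
              | inl z =>
                exact (hM.2 g hg _ hg' (fun h' => hgne h'.symm) _ ha _ hc).2 trivial
              | inr z =>
                exact (hM.2 g hg _ hg' (fun h' => hgne h'.symm) _ hb _ hc).2 trivial
            · exact (hM.2 g hg e he hge _ hb _ ha).2 trivial
        obtain ⟨M₂, hM₂, hc⟩ := pull_right u₂ hM hall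
        calc indMatchNum (joinG G₁ G₂) = M₂.card := by rw [hc, hcard]
          _ ≤ indMatchNum G₂ := le_nu hM₂
          _ ≤ _ := le_max_right _ _
  · apply max_le
    · obtain ⟨M, hM, hcard⟩ := nu_spec G₁
      have := le_nu (map_inl_matching G₂ hM)
      rwa [Finset.card_image_of_injective _ (Sym2.map.injective Sum.inl_injective),
        hcard] at this
    · obtain ⟨M, hM, hcard⟩ := nu_spec G₂
      have := le_nu (map_inr_matching G₁ hM)
      rwa [Finset.card_image_of_injective _ (Sym2.map.injective Sum.inr_injective),
        hcard] at this
end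

section
/- Let G be a finite simple graph on vertex set {x_1,...,x_h, y_1,...,y_h} without isolated vertices, such that Y = {y_1,...,y_h} is an independent set, {x_i,y_i} ∈ E(G) for all i, and G satisfies: (1) for distinct i,j,k and z_i ∈ {x_i,y_i}, if {z_i,x_j} ∈ E(G) and {y_j,x_k} ∈ E(G) then {z_i,x_k} ∈ E(G); (2) if {x_i,y_j} ∈ E(G) then {x_i,x_j} ∉ E(G). Then every maximal independent set of G has cardinality exactly h; that is, G is unmixed (well-covered). -/
open SimpleGraph

variable {h : ℕ}

/-- a labeled graph satisfying conditions (1) and (2) is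
well-covered: every maximal independent set has cardinality h. -/
theorem stmt10 (h : ℕ) (G : SimpleGraph (Vtx h))
    (hiso : ∀ v : Vtx h, ∃ w, G.Adj v w)
    (hYind : IndepSet G (Yset h))
    (hpair : ∀ i : Fin h, G.Adj (xv i) (yv i))
    (h1 : Cond1 G) (h2 : Cond2 G) :
    ∀ S : Set (Vtx h), MaxIndepSet G S → S.ncard = h := by
  intro S hS
  obtain ⟨hind, hmax⟩ := hS
  -- maximality: every vertex not in S has a neighbor in S
  have hnbr : ∀ v : Vtx h, v ∉ S → ∃ s ∈ S, G.Adj v s := by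
    intro v hv
    by_contra hc
    push_neg at hc
    have hins : IndepSet G (insert v S) := by
      intro u hu w hw
      rcases hu with rfl | hu
      · rcases hw with rfl | hw
        · exact G.loopless.irrefl _
        · exact hc w hw
      · rcases hw with rfl | hw
        · intro hadj; exact hc u hu hadj.symm
        · exact hind u hu w hw
    have := hmax (insert v S) hins (Set.subset_insert v S)
    exact hv (this ▸ Set.mem_insert v S)
  -- at most one vertex per pair
  have hmost : ∀ i : Fin h, ¬ (xv i ∈ S ∧ yv i ∈ S) := by
    rintro i ⟨hx, hy⟩
    exact hind _ hx _ hy (hpair i)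
  -- at least one vertex per pair
  have hleast : ∀ i : Fin h, xv i ∈ S ∨ yv i ∈ S := by
    intro i
    by_contra hc
    push_neg at hc
    obtain ⟨hxi, hyi⟩ := hc
    obtain ⟨s, hsS, hsadj⟩ := hnbr (yv i) hyi
    obtain ⟨j, rfl⟩ | ⟨j, rfl⟩ : (∃ j, s = xv j) ∨ (∃ j, s = yv j) := by
      cases s with
      | inl j => exact Or.inl ⟨j, rfl⟩
      | inr j => exact Or.inr ⟨j, rfl⟩
    swap
    · exact hYind (yv i) ⟨i, rfl⟩ (yv j) ⟨j, rfl⟩ hsadj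
    have hij : i ≠ j := by rintro rfl; exact hxi hsS
    obtain ⟨t, htS, htadj⟩ := hnbr (xv i) hxi
    obtain ⟨k, rfl⟩ | ⟨k, rfl⟩ : (∃ k, t = xv k) ∨ (∃ k, t = yv k) := by
      cases t with
      | inl k => exact Or.inl ⟨k, rfl⟩
      | inr k => exact Or.inr ⟨k, rfl⟩
    · -- t = x_k, with Adj x_i x_k
      have hik : i ≠ k := by rintro rfl; exact hxi htS
      have hkj : k ≠ j := by
        rintro rfl
        exact h2 _ _ hsadj.symm htadj.symm
      have : G.Adj (xv k) (xv j) :=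
        h1 k i j hik.symm hij hkj (xv k) (Or.inl rfl) htadj.symm hsadj
      exact hind _ htS _ hsS this
    · -- t = y_k, with Adj x_i y_k
      have hik : i ≠ k := by rintro rfl; exact hyi htS
      have hkj : k ≠ j := by
        rintro rfl
        exact hmost _ ⟨hsS, htS⟩
      have : G.Adj (yv k) (xv j) :=
        h1 k i j hik.symm hij hkj (yv k) (Or.inr rfl) htadj.symm hsadj
      exact hind _ htS _ hsS this
  classical
  -- the selector function
  set g : Fin h → Vtx h := fun i => if Sum.inl i ∈ S then Sum.inl i else Sum.inr i with hg
  have hgS : ∀ i, g i ∈ S := by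
    intro i
    by_cases hx : Sum.inl i ∈ S
    · simp only [hg, if_pos hx]; exact hx
    · have := (hleast i).resolve_left hx
      simp only [hg, if_neg hx]; exact this
  have hSg : S = Set.range g := by
    ext v
    constructor
    · intro hv
      cases v with
      | inl i => exact ⟨i, by simp only [hg, if_pos hv]⟩
      | inr i =>
        have hx : Sum.inl i ∉ S := fun hx => hmost i ⟨hx, hv⟩
        exact ⟨i, by simp only [hg, if_neg hx]⟩
    · rintro ⟨i, rfl⟩; exact hgS i
  have hginj : Function.Injective g := by
    intro a b hab
    simp only [hg] at hab
    by_cases ha : Sum.inl a ∈ S <;> by_cases hb : Sum.inl b ∈ S <;>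
      simp [ha, hb] at hab <;> exact hab
  rw [hSg, Set.ncard_eq_toFinset_card', Set.toFinset_range,
    Finset.card_image_of_injective _ hginj]
  simp
end

section
/- Let G be a finite simple graph on vertex set {x_1,...,x_h, y_1,...,y_h} with Y = {y_1,...,y_h} a maximal independent set, X = {x_1,...,x_h} a minimal vertex cover, {x_i,y_i} ∈ E(G) for all i, satisfying conditions (1) and (2) below. Let e ∈ E(G) and let G' be the graph on V(G) whose edges are E(G) together with all pairs {u,v} of distinct vertices even-connected with respect to e (i.e., there is a path u,a,b,v in G with {a,b} = e). Let t be a vertex, j,k indices, and t_i ∈ {x_i, y_i}. If {t_i, x_j} ∈ E(G') and {y_j, x_k} ∈ E(G') with i,j,k distinct, then {t_i, x_k} ∈ E(G') or {t_i, y_j} ∈ E(G'). -/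
open SimpleGraph

variable {h : ℕ}

lemma ecGraph_adj {W : Type*} (G : SimpleGraph W) (a b u v : W) :
    (ecGraph G a b).Adj u v ↔
      u ≠ v ∧ (G.Adj u v ∨ (G.Adj u a ∧ G.Adj b v) ∨ (G.Adj u b ∧ G.Adj a v)) :=
  Iff.rfl

/-- Any neighbor of a `y` vertex is an `x` vertex. -/
lemma nbrY {G : SimpleGraph (Vtx h)} (hY : IndepSet G (Yset h)) {j : Fin h} {v : Vtx h}
    (hv : G.Adj (yv j) v) : ∃ m, v = xv m := by
  obtain m | m := v
  · exact ⟨m, rfl⟩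
  · exact absurd hv (hY _ ⟨j, rfl⟩ _ ⟨m, rfl⟩)

/-- Key step: condition (1) extended to every vertex `w` (degenerate index
coincidences handled via loopless-ness, `hpair`, and condition (2)). -/
lemma step {G : SimpleGraph (Vtx h)} (hpair : ∀ i : Fin h, G.Adj (xv i) (yv i))
    (h1 : Cond1 G) (h2 : Cond2 G) {j k : Fin h} (hjk : j ≠ k) (w : Vtx h)
    (hwj : G.Adj w (xv j)) (hjk' : G.Adj (yv j) (xv k)) : G.Adj w (xv k) := by
  obtain n | n := w
  · rcases eq_or_ne n j with rfl | hnj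
    · exact absurd hwj (G.loopless.irrefl _)
    rcases eq_or_ne n k with rfl | hnk
    · exact absurd hwj (h2 _ j hjk'.symm)
    · exact h1 n j k hnj hjk hnk (xv n) (Or.inl rfl) hwj hjk'
  · rcases eq_or_ne n j with rfl | hnj
    · exact hjk'
    rcases eq_or_ne n k with rfl | hnk
    · exact (hpair _).symm
    · exact h1 n j k hnj hjk hnk (yv n) (Or.inr rfl) hwj hjk'

/-- single-edge case of Lemma 3.6: in the even-connection graph
G' of an edge e, if {tᵢ,xⱼ}, {yⱼ,xₖ} ∈ E(G') with i,j,k distinct, then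
{tᵢ,xₖ} ∈ E(G') or {tᵢ,yⱼ} ∈ E(G'). -/
theorem stmt11 (h : ℕ) (G : SimpleGraph (Vtx h))
    (hY : MaxIndepSet G (Yset h)) (hX : MinVertexCover G (Xset h))
    (hpair : ∀ i : Fin h, G.Adj (xv i) (yv i))
    (h1 : Cond1 G) (h2 : Cond2 G)
    (a b : Vtx h) (he : G.Adj a b)
    (G' : SimpleGraph (Vtx h)) (hG' : G' = ecGraph G a b)
    (i j k : Fin h) (hij : i ≠ j) (hjk : j ≠ k) (hik : i ≠ k)
    (t : Vtx h) (ht : t ∈ ({xv i, yv i} : Set (Vtx h)))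
    (h₁ : G'.Adj t (xv j)) (h₂ : G'.Adj (yv j) (xv k)) :
    G'.Adj t (xv k) ∨ G'.Adj t (yv j) := by
  subst hG'
  have hYind : IndepSet G (Yset h) := hY.1
  -- inequalities
  have htk : t ≠ xv k := by
    rcases ht with rfl | rfl
    · simpa [xv] using hik
    · simp [xv, yv]
  have htj : t ≠ yv j := by
    rcases ht with rfl | rfl
    · simp [xv, yv]
    · simpa [yv] using hij
  rw [ecGraph_adj] at h₁ h₂
  obtain ⟨-, hc1⟩ := h₁
  obtain ⟨-, hc2⟩ := h₂
  rw [ecGraph_adj, ecGraph_adj]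
  rcases hc1 with htj' | ⟨hta, hbj⟩ | ⟨htb, haj⟩
  · -- t ~ x_j in G
    rcases hc2 with hjk' | ⟨hya, hbk⟩ | ⟨hyb, hak⟩
    · exact Or.inl ⟨htk, Or.inl (step hpair h1 h2 hjk t htj' hjk')⟩
    · obtain ⟨m, rfl⟩ := nbrY hYind hya
      have hta : G.Adj t (xv m) := by
        rcases eq_or_ne j m with rfl | hjm
        · exact htj'
        · exact step hpair h1 h2 hjm t htj' hya
      exact Or.inl ⟨htk, Or.inr (Or.inl ⟨hta, hbk⟩)⟩
    · obtain ⟨m, rfl⟩ := nbrY hYind hyb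
      have htb : G.Adj t (xv m) := by
        rcases eq_or_ne j m with rfl | hjm
        · exact htj'
        · exact step hpair h1 h2 hjm t htj' hyb
      exact Or.inl ⟨htk, Or.inr (Or.inr ⟨htb, hak⟩)⟩
  · -- t ~ a, b ~ x_j
    rcases hc2 with hjk' | ⟨hya, hbk⟩ | ⟨hyb, hak⟩
    · exact Or.inl ⟨htk, Or.inr (Or.inl ⟨hta, step hpair h1 h2 hjk b hbj hjk'⟩)⟩
    · exact Or.inl ⟨htk, Or.inr (Or.inl ⟨hta, hbk⟩)⟩
    · obtain ⟨m, rfl⟩ := nbrY hYind hyb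
      exact absurd hbj (h2 m j hyb.symm)
  · -- t ~ b, a ~ x_j
    rcases hc2 with hjk' | ⟨hya, hbk⟩ | ⟨hyb, hak⟩
    · exact Or.inl ⟨htk, Or.inr (Or.inr ⟨htb, step hpair h1 h2 hjk a haj hjk'⟩)⟩
    · obtain ⟨m, rfl⟩ := nbrY hYind hya
      exact absurd haj (h2 m j hya.symm)
    · exact Or.inl ⟨htk, Or.inr (Or.inr ⟨htb, hak⟩)⟩
end

section
/- Let G be a finite simple graph, e = {a,b} ∈ E(G), and define G' on V(G) by adding to E(G) all pairs {u,v} of distinct vertices with ({u,a},{b,v} ∈ E(G)) or ({u,b},{a,v} ∈ E(G)). Let y be a vertex of G, let H = G \ N_G[y], and suppose a,b ∈ V(H); define H' on V(H) analogously from H and e. Then G' \ N_{G'}[y] is an induced subgraph of H'. -/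
open SimpleGraph

/-- The induced subgraph of `G` obtained by deleting the vertex set `S`
(modeled on the same vertex type). -/
def delG {W : Type*} (G : SimpleGraph W) (S : Set W) : SimpleGraph W where
  Adj u v := u ∉ S ∧ v ∉ S ∧ G.Adj u v
  symm := by constructor; intro u v hv; exact ⟨hv.2.1, hv.1, hv.2.2.symm⟩
  loopless := by constructor; intro u hu; exact G.ne_of_adj hu.2.2 rfl

/-- single-edge case of Lemma 4.5: with H = G \ N_G[y] and
a, b vertices of H, the graph G' \ N_{G'}[y] is an induced subgraph of H':
the two graphs have the same edges among the vertices outside N_{G'}[y]. -/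
theorem stmt12 {W : Type*} (G : SimpleGraph W) (a b : W) (hab : G.Adj a b)
    (y : W) (NGy : Set W) (hNGy : NGy = {v | v = y ∨ G.Adj y v})
    (H : SimpleGraph W) (hH : H = delG G NGy)
    (ha : a ∉ NGy) (hb : b ∉ NGy)
    (G' H' : SimpleGraph W)
    (hG' : G' = ecGraph G a b) (hH' : H' = ecGraph H a b)
    (NG'y : Set W) (hNG'y : NG'y = {v | v = y ∨ G'.Adj y v}) :
    ∀ u v : W, u ∉ NG'y → v ∉ NG'y → ((delG G' NG'y).Adj u v ↔ H'.Adj u v) := by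
  subst hG' hH hH' hNG'y hNGy
  intro u v hu hv
  have key : ∀ w : W, w ∉ {v | v = y ∨ (ecGraph G a b).Adj y v} →
      w ∉ {v | v = y ∨ G.Adj y v} := by
    intro w hw hw'
    apply hw
    rcases hw' with h | h
    · exact Or.inl h
    · exact Or.inr ⟨h.ne, Or.inl h⟩
  have hu' := key u hu
  have hv' := key v hv
  have ha' : a ∉ {v | v = y ∨ G.Adj y v} := ha
  have hb' : b ∉ {v | v = y ∨ G.Adj y v} := hb
  simp only [delG, ecGraph] at *
  constructor
  · rintro ⟨_, _, hne, hor⟩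
    exact ⟨hne, by tauto⟩
  · rintro ⟨hne, hor⟩
    exact ⟨hu, hv, hne, by tauto⟩
end

section
/- Let G be a finite simple graph on vertex set {x_1,...,x_h, y_1,...,y_h} with Y = {y_1,...,y_h} a maximal independent set, X = {x_1,...,x_h} a minimal vertex cover, {x_i,y_i} ∈ E(G) for all i, satisfying: (1) for distinct i,j,k and z_i ∈ {x_i,y_i}, if {z_i,x_j} ∈ E(G) and {y_j,x_k} ∈ E(G) then {z_i,x_k} ∈ E(G); (2) if {x_i,y_j} ∈ E(G) then {x_i,x_j} ∉ E(G). Let e = {x_n, y_m} ∈ E(G), assume no vertex of G is adjacent to both x_n and y_m, and let G' be the graph on V(G) adding to E(G) all pairs of distinct vertices even-connected with respect to e. Then G' is a very well-covered graph: X is a minimal vertex cover of G', Y is a maximal independent set of G', {x_i,y_i} ∈ E(G') for all i, and G' satisfies conditions (1) and (2). -/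
open SimpleGraph

variable {h : ℕ}

/-- Theorem 3.4, case s = 1: if no vertex of G is adjacent to
both xₙ and yₘ, then the even-connection graph G' of the edge {xₙ, yₘ} is
again a (labeled) very well-covered graph. -/
theorem stmt14 (h : ℕ) (G : SimpleGraph (Vtx h))
    (hY : MaxIndepSet G (Yset h)) (hX : MinVertexCover G (Xset h))
    (hpair : ∀ i : Fin h, G.Adj (xv i) (yv i))
    (h1 : Cond1 G) (h2 : Cond2 G)
    (n m : Fin h) (he : G.Adj (xv n) (yv m))
    (hsq : ∀ u : Vtx h, ¬ (G.Adj u (xv n) ∧ G.Adj u (yv m)))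
    (G' : SimpleGraph (Vtx h)) (hG' : G' = ecGraph G (xv n) (yv m)) :
    MinVertexCover G' (Xset h) ∧ MaxIndepSet G' (Yset h) ∧
    (∀ i : Fin h, G'.Adj (xv i) (yv i)) ∧ Cond1 G' ∧ Cond2 G' := by
  subst hG'
  have yind : ∀ i j : Fin h, ¬ G.Adj (yv i) (yv j) := fun i j =>
    hY.1 (yv i) ⟨i, rfl⟩ (yv j) ⟨j, rfl⟩
  have GleG' : ∀ u v, G.Adj u v → (ecGraph G (xv n) (yv m)).Adj u v :=
    fun u v hadj => ⟨hadj.ne, Or.inl hadj⟩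
  refine ⟨⟨?_, ?_⟩, ⟨?_, ?_⟩, ?_, ?_, ?_⟩
  · -- X is a vertex cover of G'
    intro u v hadj
    rw [ecGraph_adj] at hadj
    obtain ⟨-, hg | ⟨ha1, ha2⟩ | ⟨ha1, ha2⟩⟩ := hadj
    · exact hX.1 u v hg
    · cases v with
      | inl j => exact Or.inr ⟨j, rfl⟩
      | inr j => exact absurd ha2 (yind m j)
    · cases u with
      | inl i => exact Or.inl ⟨i, rfl⟩
      | inr i => exact absurd ha1 (yind i m)
  · -- minimality of X
    intro D hD hsub
    exact hX.2 D (fun u v hadj => hD u v (GleG' u v hadj)) hsub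
  · -- Y independent in G'
    intro u hu v hv hadj
    obtain ⟨i, rfl⟩ := hu
    obtain ⟨j, rfl⟩ := hv
    rw [ecGraph_adj] at hadj
    obtain ⟨-, hg | ⟨ha1, ha2⟩ | ⟨ha1, ha2⟩⟩ := hadj
    · exact yind i j hg
    · exact yind m j ha2
    · exact yind i m ha1
  · -- maximality of Y
    intro T hT hsub
    exact hY.2 T (fun u hu v hv hadj => hT u hu v hv (GleG' u v hadj)) hsub
  · -- pair edges
    intro i
    exact GleG' _ _ (hpair i)
  · -- Cond1 for G'
    intro i j k hij hjk hik z hz hzj hjkadj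
    have hzk : z ≠ xv k := by
      rcases hz with rfl | hz
      · exact fun hh => hik (Sum.inl_injective hh)
      · rw [Set.mem_singleton_iff] at hz
        subst hz
        exact fun hh => Sum.inr_ne_inl hh
    rw [ecGraph_adj] at hzj hjkadj
    rw [ecGraph_adj]
    refine ⟨hzk, ?_⟩
    obtain ⟨-, hzj⟩ := hzj
    obtain ⟨-, hjkadj⟩ := hjkadj
    rcases hjkadj with hjk1 | ⟨hja, hmk⟩ | ⟨hjm, hnk⟩
    · -- old edge y_j ~ x_k
      rcases hzj with hzj1 | ⟨hzn, hmj⟩ | ⟨hzm, hnj⟩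
      · exact Or.inl (h1 i j k hij hjk hik z hz hzj1 hjk1)
      · -- need y_m ~ x_k
        have hmk : G.Adj (yv m) (xv k) := by
          by_cases hmj' : m = j
          · rw [hmj']; exact hjk1
          · by_cases hmk' : m = k
            · rw [hmk']; exact (hpair k).symm
            · exact h1 m j k hmj' hjk hmk' (yv m) (Set.mem_insert_of_mem _ rfl) hmj hjk1
        exact Or.inr (Or.inl ⟨hzn, hmk⟩)
      · -- need x_n ~ x_k
        by_cases hnk' : n = k
        · rw [hnk'] at hnj
          exact absurd hnj (h2 k j (by rw [← hnk']; exact (by rw [hnk']; exact hjk1.symm)))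
        · by_cases hnj' : n = j
          · rw [hnj'] at hnj; exact absurd hnj (G.loopless.irrefl _)
          · exact Or.inr (Or.inr ⟨hzm,
              h1 n j k hnj' hjk hnk' (xv n) (Set.mem_insert _ _) hnj hjk1⟩)
    · -- new edge: y_j ~ x_n and y_m ~ x_k
      rcases hzj with hzj1 | ⟨hzn, hmj⟩ | ⟨hzm, hnj⟩
      · -- need z ~ x_n
        by_cases hjn : j = n
        · rw [hjn] at hzj1
          exact Or.inr (Or.inl ⟨hzj1, hmk⟩)
        · by_cases hin : i = n
          · rcases hz with rfl | hz
            · rw [hin] at hzj1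
              exact absurd hzj1 (h2 n j hja.symm)
            · rw [Set.mem_singleton_iff] at hz
              subst hz
              rw [hin]
              exact Or.inr (Or.inl ⟨(hpair n).symm, hmk⟩)
          · exact Or.inr (Or.inl ⟨h1 i j n hij hjn hin z hz hzj1 hja, hmk⟩)
      · exact Or.inr (Or.inl ⟨hzn, hmk⟩)
      · exact absurd hnj (h2 n j hja.symm)
    · -- y_j ~ y_m : impossible
      exact absurd hjm (yind j m)
  · -- Cond2 for G'
    intro i j hxy hxx
    rw [ecGraph_adj] at hxy hxx
    obtain ⟨-, hxy⟩ := hxy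
    obtain ⟨hne, hxx⟩ := hxx
    have hij : i ≠ j := fun hh => hne (by rw [hh])
    rcases hxy with hxy1 | ⟨hin, hmj⟩ | ⟨him, hnj⟩
    · rcases hxx with hxx1 | ⟨hin, hmj⟩ | ⟨him, hnj⟩
      · exact h2 i j hxy1 hxx1
      · -- x_i~x_n, y_m~x_j, x_i~y_j
        by_cases hmi : m = i
        · exact hsq (xv i) ⟨hin, by rw [← hmi]; exact (by rw [hmi]; exact hpair i)⟩
        · by_cases hmj' : m = j
          · exact hsq (xv i) ⟨hin, by rw [hmj']; exact hxy1⟩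
          · have hmi2 : G.Adj (yv m) (xv i) :=
              h1 m j i hmj' (Ne.symm hij) hmi (yv m) (Set.mem_insert_of_mem _ rfl)
                hmj hxy1.symm
            exact hsq (xv i) ⟨hin, hmi2.symm⟩
      · -- x_i~y_m, x_n~x_j, x_i~y_j
        by_cases hni : n = i
        · rw [hni] at hnj
          exact h2 i j hxy1 hnj
        · by_cases hnj' : n = j
          · rw [hnj'] at hnj; exact G.loopless.irrefl _ hnj
          · have hni2 : G.Adj (xv n) (xv i) :=
              h1 n j i hnj' (Ne.symm hij) hni (xv n) (Set.mem_insert _ _) hnj hxy1.symm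
            exact hsq (xv i) ⟨hni2.symm, him⟩
    · exact yind m j hmj
    · -- x_i~y_m, x_n~y_j
      rcases hxx with hxx1 | ⟨hin, hmj⟩ | ⟨him2, hnj2⟩
      · -- x_i~x_j
        by_cases hni : n = i
        · rw [hni] at hnj
          exact h2 i j hnj hxx1
        · by_cases hjn : j = n
          · rw [hjn] at hxx1
            exact hsq (xv i) ⟨hxx1, him⟩
          · have hxin : G.Adj (xv i) (xv n) :=
              h1 i j n hij hjn (fun hh => hni hh.symm) (xv i)
                (Set.mem_insert _ _) hxx1 hnj.symm
            exact hsq (xv i) ⟨hxin, him⟩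
      · exact hsq (xv i) ⟨hin, him⟩
      · exact h2 n j hnj hnj2
end
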